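/- For n ≥ 0, Coker's formula in two-variable form: N_{n+1}(x) = M_n(x; 1+x), where M_n(u;v) = \sum_{k=0}^{\lfloor n/2 \rfloor} binom(n,2k) C_k u^{k+1} v^{n-2k}. -/

import Mathlib

open Finset

/-- The two-variable Motzkin polynomial M_n(u;v). -/
def motzkinPoly (n : ℕ) (u v : ℚ) : ℚ :=
  ∑ k ∈ Finset.range (n / 2 + 1),
    (n.choose (2 * k) * catalan k : ℚ) * u ^ (k + 1) * v ^ (n - 2 * k)

namespace CokerAux

/-! ### Narayana side -/

/-- Narayana number N(n+1, k+1) as a rational. -/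
def nar (n k : ℕ) : ℚ := ((n + 1).choose (k + 1) * (n + 1).choose k : ℚ) / (n + 1)

lemma nar_of_lt {n k : ℕ} (h : n < k) : nar n k = 0 := by
  simp [nar, Nat.choose_eq_zero_of_lt (show n + 1 < k + 1 by omega)]

lemma nar_eq' (k d : ℕ) :
    nar (k + d) k = ((k + d + 1).factorial * (k + d + 1).factorial : ℚ) /
      ((k + 1).factorial * d.factorial * k.factorial * (d + 1).factorial * (k + d + 1)) := by
  have h1 : k + d + 1 - (k + 1) = d := by omega
  have h2 : k + d + 1 - k = d + 1 := by omega
  have n1 : ((k + 1).factorial : ℚ) ≠ 0 := by positivity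
  have n2 : (d.factorial : ℚ) ≠ 0 := by positivity
  have n3 : (k.factorial : ℚ) ≠ 0 := by positivity
  have n4 : ((d + 1).factorial : ℚ) ≠ 0 := by positivity
  have n5 : ((k : ℚ) + d + 1) ≠ 0 := by positivity
  rw [nar, Nat.cast_choose ℚ (show k + 1 ≤ k + d + 1 by omega),
    Nat.cast_choose ℚ (show k ≤ k + d + 1 by omega), h1, h2]
  push_cast
  field_simp

lemma nar_zero_right (n : ℕ) : nar n 0 = 1 := by
  have : ((n : ℚ) + 1) ≠ 0 := by positivity
  simp [nar, Nat.choose_one_right]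
  field_simp
  exact this

lemma nar_one_right (n : ℕ) : nar n 1 = n * (n + 1) / 2 := by
  have hdvd : 2 ∣ (n + 1) * n := by
    rcases Nat.even_or_odd n with h | h
    · exact Dvd.dvd.mul_left h.two_dvd _
    · obtain ⟨m, rfl⟩ := h
      exact Dvd.dvd.mul_right (by omega : 2 ∣ (2 * m + 1 + 1)) _
  have h2 : ((n + 1).choose 2 : ℚ) * 2 = (n + 1) * n := by
    have : (n + 1).choose 2 * 2 = (n + 1) * n := by
      rw [Nat.choose_two_right]
      simpa using Nat.div_mul_cancel hdvd
    exact_mod_cast this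
  have hne : ((n : ℚ) + 1) ≠ 0 := by positivity
  rw [nar, Nat.choose_one_right]
  push_cast
  field_simp
  linear_combination h2

lemma sOne (k d : ℕ) :
    ((d : ℚ) + 1) * ((d : ℚ) + 2) * nar (k + (d + 1)) k
      = ((k : ℚ) + d + 2) * ((k : ℚ) + d + 1) * nar (k + d) k := by
  have h1 : (k.factorial : ℚ) ≠ 0 := by positivity
  have h2 : (d.factorial : ℚ) ≠ 0 := by positivity
  have h3 : ((k + d).factorial : ℚ) ≠ 0 := by positivity
  rw [nar_eq' k (d + 1), nar_eq' k d]
  simp only [show k + (d + 1) + 1 = k + d + 2 from by omega,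
    show d + 1 + 1 = d + 2 from by omega]
  push_cast [Nat.factorial_succ]
  field_simp
  ring

lemma sTwo (k d : ℕ) :
    ((k : ℚ) + 1) * ((k : ℚ) + 2) * nar (k + 1 + d) (k + 1)
      = ((d : ℚ) + 1) * ((d : ℚ) + 2) * nar (k + (d + 1)) k := by
  have h1 : (k.factorial : ℚ) ≠ 0 := by positivity
  have h2 : (d.factorial : ℚ) ≠ 0 := by positivity
  have h3 : ((k + d).factorial : ℚ) ≠ 0 := by positivity
  rw [nar_eq' (k + 1) d, nar_eq' k (d + 1)]
  simp only [show k + 1 + d + 1 = k + d + 2 from by omega,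
    show k + (d + 1) + 1 = k + d + 2 from by omega,
    show k + 1 + 1 = k + 2 from by omega, show d + 1 + 1 = d + 2 from by omega]
  push_cast [Nat.factorial_succ]
  field_simp
  ring

/-- The three-term recurrence for Narayana numbers, coefficientwise, generic index. -/
lemma nar_rec (n k : ℕ) :
    ((n : ℚ) + 4) * nar (n + 2) (k + 2)
      = (2 * (n : ℚ) + 5) * (nar (n + 1) (k + 2) + nar (n + 1) (k + 1))
        - ((n : ℚ) + 1) * (nar n (k + 2) - 2 * nar n (k + 1) + nar n k) := by
  rcases (by omega : k + 2 ≤ n ∨ k + 1 = n ∨ k = n ∨ n < k) with hA | rfl | rfl | hlt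
  · obtain ⟨d, rfl⟩ : ∃ d, n = k + 2 + d := ⟨n - (k + 2), by omega⟩
    have t1 : nar (k + 2 + d + 2) (k + 2) = nar (k + 2 + (d + 2)) (k + 2) := by
      rw [show k + 2 + d + 2 = k + 2 + (d + 2) from by omega]
    have t2 : nar (k + 2 + d + 1) (k + 2) = nar (k + 2 + (d + 1)) (k + 2) := by
      rw [show k + 2 + d + 1 = k + 2 + (d + 1) from by omega]
    have t3 : nar (k + 2 + d + 1) (k + 1) = nar (k + 1 + (d + 2)) (k + 1) := by
      rw [show k + 2 + d + 1 = k + 1 + (d + 2) from by omega]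
    have t5 : nar (k + 2 + d) (k + 1) = nar (k + 1 + (d + 1)) (k + 1) := by
      rw [show k + 2 + d = k + 1 + (d + 1) from by omega]
    have t6 : nar (k + 2 + d) k = nar (k + (d + 2)) k := by
      rw [show k + 2 + d = k + (d + 2) from by omega]
    have E1 : ((k : ℚ) + 1) * ((k : ℚ) + 2) * nar (k + 1 + (d + 1)) (k + 1)
        = ((d : ℚ) + 2) * ((d : ℚ) + 3) * nar (k + (d + 2)) k := by
      have h := sTwo k (d + 1)
      rw [show k + (d + 1 + 1) = k + (d + 2) from by omega] at h
      push_cast at h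
      linear_combination h
    have E2 : ((k : ℚ) + 1) * ((k : ℚ) + 2) ^ 2 * ((k : ℚ) + 3) * nar (k + 2 + d) (k + 2)
        = ((d : ℚ) + 1) * ((d : ℚ) + 2) ^ 2 * ((d : ℚ) + 3) * nar (k + (d + 2)) k := by
      have h := sTwo (k + 1) d
      rw [show k + 1 + 1 = k + 2 from by omega] at h
      push_cast at h
      linear_combination ((k : ℚ) + 1) * ((k : ℚ) + 2) * h + ((d : ℚ) + 1) * ((d : ℚ) + 2) * E1
    have E3 : ((k : ℚ) + 1) * ((k : ℚ) + 2) * ((d : ℚ) + 2) * ((d : ℚ) + 3)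
          * nar (k + 1 + (d + 2)) (k + 1)
        = ((k : ℚ) + (d : ℚ) + 4) * ((k : ℚ) + (d : ℚ) + 3) * ((d : ℚ) + 2) * ((d : ℚ) + 3)
          * nar (k + (d + 2)) k := by
      have h := sOne (k + 1) (d + 1)
      rw [show k + 1 + (d + 1 + 1) = k + 1 + (d + 2) from by omega] at h
      push_cast at h
      linear_combination ((k : ℚ) + 1) * ((k : ℚ) + 2) * h
        + ((k : ℚ) + (d : ℚ) + 4) * ((k : ℚ) + (d : ℚ) + 3) * E1
    have E4 : ((k : ℚ) + 1) * ((k : ℚ) + 2) ^ 2 * ((k : ℚ) + 3) * ((d : ℚ) + 1) * ((d : ℚ) + 2)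
          * nar (k + 2 + (d + 1)) (k + 2)
        = ((k : ℚ) + (d : ℚ) + 4) * ((k : ℚ) + (d : ℚ) + 3) * ((d : ℚ) + 1) * ((d : ℚ) + 2) ^ 2
          * ((d : ℚ) + 3) * nar (k + (d + 2)) k := by
      have h := sOne (k + 2) d
      push_cast at h
      linear_combination ((k : ℚ) + 1) * ((k : ℚ) + 2) ^ 2 * ((k : ℚ) + 3) * h
        + ((k : ℚ) + (d : ℚ) + 4) * ((k : ℚ) + (d : ℚ) + 3) * E2
    have E5 : ((k : ℚ) + 1) * ((k : ℚ) + 2) ^ 2 * ((k : ℚ) + 3) * ((d : ℚ) + 1) * ((d : ℚ) + 2) ^ 2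
          * ((d : ℚ) + 3) * nar (k + 2 + (d + 2)) (k + 2)
        = ((k : ℚ) + (d : ℚ) + 5) * ((k : ℚ) + (d : ℚ) + 4) ^ 2 * ((k : ℚ) + (d : ℚ) + 3)
          * ((d : ℚ) + 1) * ((d : ℚ) + 2) ^ 2 * ((d : ℚ) + 3) * nar (k + (d + 2)) k := by
      have h := sOne (k + 2) (d + 1)
      rw [show k + 2 + (d + 1 + 1) = k + 2 + (d + 2) from by omega] at h
      push_cast at h
      linear_combination ((k : ℚ) + 1) * ((k : ℚ) + 2) ^ 2 * ((k : ℚ) + 3) * ((d : ℚ) + 1)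
          * ((d : ℚ) + 2) * h
        + ((k : ℚ) + (d : ℚ) + 5) * ((k : ℚ) + (d : ℚ) + 4) * E4
    rw [t1, t2, t3, t5, t6]
    push_cast
    refine mul_left_cancel₀ (a := ((k : ℚ) + 1) * ((k : ℚ) + 2) ^ 2 * ((k : ℚ) + 3) * ((d : ℚ) + 1)
      * ((d : ℚ) + 2) ^ 2 * ((d : ℚ) + 3)) (by positivity) ?_
    linear_combination ((k : ℚ) + (d : ℚ) + 6) * E5
      - (2 * ((k : ℚ) + (d : ℚ)) + 9) * ((d : ℚ) + 2) * ((d : ℚ) + 3) * E4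
      - (2 * ((k : ℚ) + (d : ℚ)) + 9) * ((k : ℚ) + 2) * ((k : ℚ) + 3) * ((d : ℚ) + 1)
          * ((d : ℚ) + 2) * E3
      + ((k : ℚ) + (d : ℚ) + 3) * ((d : ℚ) + 1) * ((d : ℚ) + 2) ^ 2 * ((d : ℚ) + 3) * E2
      - 2 * ((k : ℚ) + (d : ℚ) + 3) * ((k : ℚ) + 2) * ((k : ℚ) + 3) * ((d : ℚ) + 1)
          * ((d : ℚ) + 2) ^ 2 * ((d : ℚ) + 3) * E1
  · have t5 : nar (k + 1 + 2) (k + 2) = nar (k + 2 + 1) (k + 2) := by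
      rw [show k + 1 + 2 = k + 2 + 1 from by omega]
    have t4 : nar (k + 1 + 1) (k + 2) = nar (k + 2 + 0) (k + 2) := rfl
    have t2 : nar (k + 1) (k + 2) = 0 := nar_of_lt (by omega)
    have t1 : nar (k + 1) (k + 1) = nar (k + 1 + 0) (k + 1) := rfl
    have h1 : (k.factorial : ℚ) ≠ 0 := by positivity
    rw [t5, t4, t2, t1, nar_eq' (k + 2) 1, nar_eq' (k + 2) 0, nar_eq' (k + 1) 1,
      nar_eq' (k + 1) 0, nar_eq' k 1]
    simp only [show k + 2 + 1 + 1 = k + 4 from by omega, show k + 2 + 0 + 1 = k + 3 from by omega,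
      show k + 1 + 1 + 1 = k + 3 from by omega, show k + 1 + 0 + 1 = k + 2 from by omega,
      show k + 1 + 1 = k + 2 from by omega, show k + 2 + 1 = k + 3 from by omega,
      show k + 2 + 0 = k + 2 from by omega, show k + 1 + 0 = k + 1 from by omega]
    push_cast [Nat.factorial_succ, Nat.factorial_zero, Nat.factorial_one]
    field_simp
    ring
  · have t5 : nar (k + 2) (k + 2) = nar (k + 2 + 0) (k + 2) := rfl
    have t4 : nar (k + 1) (k + 2) = 0 := nar_of_lt (by omega)
    have t3 : nar (k + 1) (k + 1) = nar (k + 1 + 0) (k + 1) := rfl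
    have t2 : nar k (k + 2) = 0 := nar_of_lt (by omega)
    have t1 : nar k (k + 1) = 0 := nar_of_lt (by omega)
    have t0 : nar k k = nar (k + 0) k := rfl
    have h1 : (k.factorial : ℚ) ≠ 0 := by positivity
    rw [t5, t4, t3, t2, t1, t0, nar_eq' (k + 2) 0, nar_eq' (k + 1) 0, nar_eq' k 0]
    simp only [show k + 2 + 0 + 1 = k + 3 from by omega, show k + 1 + 0 + 1 = k + 2 from by omega,
      show k + 0 + 1 = k + 1 from by omega, show k + 2 + 0 = k + 2 from by omega,
      show k + 1 + 0 = k + 1 from by omega, show k + 0 = k from by omega]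
    push_cast [Nat.factorial_succ, Nat.factorial_zero, Nat.factorial_one]
    field_simp
    ring
  · rw [nar_of_lt (show n + 2 < k + 2 by omega), nar_of_lt (show n + 1 < k + 2 by omega),
      nar_of_lt (show n + 1 < k + 1 by omega), nar_of_lt (show n < k + 2 by omega),
      nar_of_lt (show n < k + 1 by omega), nar_of_lt hlt]
    ring

/-! ### Motzkin side -/

/-- The certificate coefficient A(n,k). -/
def am (n k : ℕ) : ℚ :=
  ((n : ℚ) + 4) * (n + 2).choose (2 * k) - (2 * (n : ℚ) + 5) * (n + 1).choose (2 * k)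
    + ((n : ℚ) + 1) * n.choose (2 * k)

lemma am_zero (n : ℕ) : am n 0 = 0 := by simp [am]; ring

lemma am_of_lt {n k : ℕ} (h : n + 2 < 2 * k) : am n k = 0 := by
  rw [am, Nat.choose_eq_zero_of_lt h, Nat.choose_eq_zero_of_lt (by omega),
    Nat.choose_eq_zero_of_lt (by omega)]
  norm_num

/-- Key certificate identity. -/
lemma aid (n k : ℕ) :
    (2 * (k : ℚ) + 1) * am n (k + 1) = 2 * ((n : ℚ) + 1) * ((k : ℚ) + 2) * n.choose (2 * k) := by
  rcases le_or_gt (2 * k + 2) n with h | h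
  · obtain ⟨e, rfl⟩ : ∃ e, n = 2 * k + e + 2 := ⟨n - (2 * k + 2), by omega⟩
    rw [am]
    rw [show 2 * (k + 1) = 2 * k + 2 from by omega,
      show 2 * k + e + 2 + 2 = 2 * k + e + 4 from by omega,
      show 2 * k + e + 2 + 1 = 2 * k + e + 3 from by omega,
      Nat.cast_choose ℚ (show 2 * k + 2 ≤ 2 * k + e + 4 by omega),
      Nat.cast_choose ℚ (show 2 * k + 2 ≤ 2 * k + e + 3 by omega),
      Nat.cast_choose ℚ (show 2 * k + 2 ≤ 2 * k + e + 2 by omega),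
      Nat.cast_choose ℚ (show 2 * k ≤ 2 * k + e + 2 by omega)]
    rw [show 2 * k + e + 4 - (2 * k + 2) = e + 2 from by omega,
      show 2 * k + e + 3 - (2 * k + 2) = e + 1 from by omega,
      show 2 * k + e + 2 - (2 * k + 2) = e from by omega,
      show 2 * k + e + 2 - 2 * k = e + 2 from by omega]
    have h1 : ((2 * k).factorial : ℚ) ≠ 0 := by positivity
    have h2 : (e.factorial : ℚ) ≠ 0 := by positivity
    have h3 : ((2 * k + e).factorial : ℚ) ≠ 0 := by positivity
    push_cast [Nat.factorial_succ]
    field_simp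
    ring
  · rcases (by omega : n = 2 * k + 1 ∨ n = 2 * k ∨ n < 2 * k) with rfl | rfl | hlt
    · rw [am, show 2 * (k + 1) = 2 * k + 2 from by omega,
        show 2 * k + 1 + 2 = (2 * k + 2) + 1 from by omega,
        show 2 * k + 1 + 1 = 2 * k + 2 from by omega,
        Nat.choose_succ_self_right, Nat.choose_self,
        Nat.choose_eq_zero_of_lt (by omega),
        show (2 * k + 1).choose (2 * k) = 2 * k + 1 from Nat.choose_succ_self_right (2 * k)]
      push_cast
      ring
    · rw [am, show 2 * (k + 1) = 2 * k + 2 from by omega,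
        show 2 * k + 2 = 2 * k + 2 from rfl, Nat.choose_self,
        Nat.choose_eq_zero_of_lt (by omega : 2 * k + 1 < 2 * k + 2),
        Nat.choose_eq_zero_of_lt (by omega : 2 * k < 2 * k + 2), Nat.choose_self]
      push_cast
      ring
    · rw [am, Nat.choose_eq_zero_of_lt (by omega), Nat.choose_eq_zero_of_lt (by omega),
        Nat.choose_eq_zero_of_lt (by omega), Nat.choose_eq_zero_of_lt (by omega)]
      norm_num

end CokerAux
namespace CokerAux

/-- Summand of the Motzkin polynomial at u = x, v = 1 + x. -/
def fm (x : ℚ) (m k : ℕ) : ℚ :=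
  (m.choose (2 * k) * catalan k : ℚ) * x ^ (k + 1) * (1 + x) ^ (m - 2 * k)

lemma fm_of_lt (x : ℚ) {m k : ℕ} (h : m < 2 * k) : fm x m k = 0 := by
  simp [fm, Nat.choose_eq_zero_of_lt h]

/-- Telescoping certificate. -/
def gg (x : ℚ) (n k : ℕ) : ℚ := -(am n k) * catalan k * x ^ (k + 1) * (1 + x) ^ (n + 2 - 2 * k)

lemma gg_zero (x : ℚ) (n : ℕ) : gg x n 0 = 0 := by simp [gg, am_zero]

lemma gg_top (x : ℚ) (n : ℕ) : gg x n (n + 3) = 0 := by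
  rw [gg, am_of_lt (by omega)]; ring

lemma catQ (k : ℕ) : ((k : ℚ) + 2) * catalan (k + 1) = 2 * (2 * (k : ℚ) + 1) * catalan k := by
  have h1 : ((k : ℚ) + 2) * catalan (k + 1) = Nat.centralBinom (k + 1) := by
    exact_mod_cast succ_mul_catalan_eq_centralBinom (k + 1)
  have h2 : ((k : ℚ) + 1) * Nat.centralBinom (k + 1)
      = 2 * (2 * (k : ℚ) + 1) * Nat.centralBinom k := by
    exact_mod_cast Nat.succ_mul_centralBinom_succ k
  have h3 : ((k : ℚ) + 1) * catalan k = Nat.centralBinom k := by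
    exact_mod_cast succ_mul_catalan_eq_centralBinom k
  refine mul_left_cancel₀ (show ((k : ℚ) + 1) ≠ 0 by positivity) ?_
  linear_combination ((k : ℚ) + 1) * h1 + h2 - 2 * (2 * (k : ℚ) + 1) * h3

lemma ham (n k : ℕ) : am n (k + 1) * (catalan (k + 1) : ℚ)
    = 4 * ((n : ℚ) + 1) * n.choose (2 * k) * catalan k := by
  have hA := aid n k
  have hc := catQ k
  refine mul_left_cancel₀ (show (2 * (k : ℚ) + 1) * ((k : ℚ) + 2) ≠ 0 by positivity) ?_
  linear_combination ((k : ℚ) + 2) * (catalan (k + 1) : ℚ) * hA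
    + 2 * ((n : ℚ) + 1) * ((k : ℚ) + 2) * (n.choose (2 * k) : ℚ) * hc

lemma gg_succ (x : ℚ) (n k : ℕ) : gg x n (k + 1)
    = -(4 * ((n : ℚ) + 1) * n.choose (2 * k) * catalan k) * x ^ (k + 2) * (1 + x) ^ (n - 2 * k) := by
  rw [gg, show n + 2 - 2 * (k + 1) = n - 2 * k from by omega, show k + 1 + 1 = k + 2 from rfl]
  linear_combination (-(x ^ (k + 2) * (1 + x) ^ (n - 2 * k))) * ham n k

/-- The per-index certificate identity. -/
lemma cert (x : ℚ) (n k : ℕ) :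
    ((n : ℚ) + 4) * fm x (n + 2) k - (2 * (n : ℚ) + 5) * (1 + x) * fm x (n + 1) k
      + ((n : ℚ) + 1) * (1 - x) ^ 2 * fm x n k = gg x n (k + 1) - gg x n k := by
  rw [gg_succ]
  rcases (by omega : 2 * k ≤ n ∨ n + 1 = 2 * k ∨ n + 2 = 2 * k ∨ n + 2 < 2 * k) with h | h | h | h
  · obtain ⟨e, rfl⟩ : ∃ e, n = 2 * k + e := ⟨n - 2 * k, by omega⟩
    rw [fm, fm, fm, gg, am]
    rw [show 2 * k + e + 2 - 2 * k = e + 2 from by omega,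
      show 2 * k + e + 1 - 2 * k = e + 1 from by omega,
      show 2 * k + e - 2 * k = e from by omega]
    push_cast
    ring
  · rw [fm_of_lt x (show n < 2 * k by omega), fm, fm, gg, am]
    rw [show n + 2 - 2 * k = 1 from by omega, show n + 1 - 2 * k = 0 from by omega,
      show (n + 1).choose (2 * k) = 1 from by rw [h]; exact Nat.choose_self _,
      show n.choose (2 * k) = 0 from Nat.choose_eq_zero_of_lt (by omega)]
    push_cast
    ring
  · rw [fm, fm_of_lt x (by omega), fm_of_lt x (by omega), gg, am,
      show n + 2 - 2 * k = 0 from by omega,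
      show (n + 2).choose (2 * k) = 1 from by rw [h]; exact Nat.choose_self _,
      show (n + 1).choose (2 * k) = 0 from Nat.choose_eq_zero_of_lt (by omega),
      show n.choose (2 * k) = 0 from Nat.choose_eq_zero_of_lt (by omega)]
    push_cast
    ring
  · rw [fm_of_lt x (by omega), fm_of_lt x (by omega), fm_of_lt x (by omega), gg,
      am_of_lt (by omega), show n.choose (2 * k) = 0 from Nat.choose_eq_zero_of_lt (by omega)]
    push_cast
    ring

end CokerAux
namespace CokerAux

/-! ### Summation plumbing -/

/-- The Narayana polynomial N_{n+1}(x). -/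
def el (x : ℚ) (n : ℕ) : ℚ := ∑ k ∈ range (n + 1), nar n k * x ^ (k + 1)

lemma el_pad (x : ℚ) (n N : ℕ) (h : n + 1 ≤ N) :
    el x n = ∑ k ∈ range N, nar n k * x ^ (k + 1) := by
  refine Finset.sum_subset (Finset.range_subset_range.mpr h) fun k hk hk' => ?_
  rw [nar_of_lt (by simp at hk'; omega), zero_mul]

lemma mp_pad (x : ℚ) (n N : ℕ) (h : n / 2 + 1 ≤ N) :
    motzkinPoly n x (1 + x) = ∑ k ∈ range N, fm x n k := by
  refine Finset.sum_subset (Finset.range_subset_range.mpr h) fun k hk hk' => ?_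
  exact fm_of_lt x (by simp at hk'; omega)

lemma sh (x : ℚ) (f : ℕ → ℚ) (M : ℕ) (hf : f M = 0) :
    x * ∑ k ∈ range (M + 1), f k * x ^ (k + 1)
      = ∑ k ∈ range (M + 1), (if k = 0 then 0 else f (k - 1)) * x ^ (k + 1) := by
  rw [Finset.mul_sum,
    Finset.sum_range_succ (fun k => x * (f k * x ^ (k + 1))) M,
    Finset.sum_range_succ' (fun k => (if k = 0 then (0 : ℚ) else f (k - 1)) * x ^ (k + 1)) M,
    hf, if_pos rfl]
  simp only [zero_mul, mul_zero, add_zero]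
  refine Finset.sum_congr rfl fun k hk => ?_
  rw [if_neg (show ¬ (k + 1 = 0) from by omega), Nat.add_sub_cancel]
  ring

/-- Combined coefficient identity, with guards. -/
lemma coeff_id (n k : ℕ) :
    ((n : ℚ) + 4) * nar (n + 2) k
      - (2 * (n : ℚ) + 5) * (nar (n + 1) k + (if k = 0 then 0 else nar (n + 1) (k - 1)))
      + ((n : ℚ) + 1) * (nar n k - 2 * (if k = 0 then 0 else nar n (k - 1))
          + (if k = 0 then 0 else if k - 1 = 0 then 0 else nar n (k - 1 - 1))) = 0 := by
  match k with
  | 0 =>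
    rw [if_pos rfl, if_pos rfl, if_pos rfl, nar_zero_right, nar_zero_right, nar_zero_right]
    ring
  | 1 =>
    rw [if_neg (show ¬ (1 = 0) from by omega), if_neg (show ¬ (1 = 0) from by omega),
      if_neg (show ¬ (1 = 0) from by omega), if_pos (show 1 - 1 = 0 from rfl),
      show (1 : ℕ) - 1 = 0 from rfl, nar_one_right, nar_one_right, nar_one_right,
      nar_zero_right, nar_zero_right]
    push_cast
    ring
  | (k + 2) =>
    have h1 : k + 2 ≠ 0 := by omega
    have h2 : k + 2 - 1 = k + 1 := by omega
    have h3 : k + 1 ≠ 0 := by omega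
    have h4 : k + 1 - 1 = k := by omega
    simp only [if_neg h1, h2, if_neg h3, h4]
    linear_combination nar_rec n k

/-- Three-term recurrence for the Narayana polynomials. -/
lemma hL (x : ℚ) (n : ℕ) :
    ((n : ℚ) + 4) * el x (n + 2)
      = (2 * (n : ℚ) + 5) * (1 + x) * el x (n + 1) - ((n : ℚ) + 1) * (1 - x) ^ 2 * el x n := by
  rw [el_pad x (n + 2) (n + 5 + 1) (by omega), el_pad x (n + 1) (n + 5 + 1) (by omega),
    el_pad x n (n + 5 + 1) (by omega)]
  have hx1 : x * ∑ k ∈ range (n + 5 + 1), nar (n + 1) k * x ^ (k + 1)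
      = ∑ k ∈ range (n + 5 + 1), (if k = 0 then 0 else nar (n + 1) (k - 1)) * x ^ (k + 1) :=
    sh x (nar (n + 1)) (n + 5) (nar_of_lt (by omega))
  have hx2 : x * ∑ k ∈ range (n + 5 + 1), nar n k * x ^ (k + 1)
      = ∑ k ∈ range (n + 5 + 1), (if k = 0 then 0 else nar n (k - 1)) * x ^ (k + 1) :=
    sh x (nar n) (n + 5) (nar_of_lt (by omega))
  have hx3 : x * ∑ k ∈ range (n + 5 + 1), (if k = 0 then 0 else nar n (k - 1)) * x ^ (k + 1)
      = ∑ k ∈ range (n + 5 + 1),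
          (if k = 0 then 0 else if k - 1 = 0 then 0 else nar n (k - 1 - 1)) * x ^ (k + 1) :=
    sh x (fun k => if k = 0 then 0 else nar n (k - 1)) (n + 5)
      (by show (if n + 5 = 0 then (0 : ℚ) else nar n (n + 5 - 1)) = 0
          rw [if_neg (show ¬ (n + 5 = 0) from by omega),
            show n + 5 - 1 = n + 4 from by omega, nar_of_lt (by omega)])
  have KEY : ∑ k ∈ range (n + 5 + 1),
      (((n : ℚ) + 4) * (nar (n + 2) k * x ^ (k + 1))
        - (2 * (n : ℚ) + 5) * (nar (n + 1) k * x ^ (k + 1)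
            + (if k = 0 then 0 else nar (n + 1) (k - 1)) * x ^ (k + 1))
        + ((n : ℚ) + 1) * (nar n k * x ^ (k + 1)
            - 2 * ((if k = 0 then 0 else nar n (k - 1)) * x ^ (k + 1))
            + (if k = 0 then 0 else if k - 1 = 0 then 0 else nar n (k - 1 - 1)) * x ^ (k + 1)))
      = 0 := by
    refine Finset.sum_eq_zero fun k _ => ?_
    linear_combination x ^ (k + 1) * coeff_id n k
  simp only [Finset.sum_add_distrib, Finset.sum_sub_distrib, ← Finset.mul_sum] at KEY
  linear_combination KEY - (2 * (n : ℚ) + 5) * hx1 + ((n : ℚ) + 1) * x * hx2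
    - 2 * ((n : ℚ) + 1) * hx2 + ((n : ℚ) + 1) * hx3

/-- Three-term recurrence for the Motzkin side. -/
lemma hM (x : ℚ) (n : ℕ) :
    ((n : ℚ) + 4) * motzkinPoly (n + 2) x (1 + x)
      = (2 * (n : ℚ) + 5) * (1 + x) * motzkinPoly (n + 1) x (1 + x)
        - ((n : ℚ) + 1) * (1 - x) ^ 2 * motzkinPoly n x (1 + x) := by
  rw [mp_pad x (n + 2) (n + 3) (by omega), mp_pad x (n + 1) (n + 3) (by omega),
    mp_pad x n (n + 3) (by omega)]
  have KEY : ∑ k ∈ range (n + 3),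
      (((n : ℚ) + 4) * fm x (n + 2) k - (2 * (n : ℚ) + 5) * (1 + x) * fm x (n + 1) k
        + ((n : ℚ) + 1) * (1 - x) ^ 2 * fm x n k) = 0 := by
    rw [Finset.sum_congr rfl fun k _ => cert x n k, Finset.sum_range_sub (gg x n),
      gg_top, gg_zero, sub_zero]
  simp only [Finset.sum_add_distrib, Finset.sum_sub_distrib, ← Finset.mul_sum] at KEY
  linear_combination KEY

/-- The main equality, by two-step strong induction. -/
lemma main (x : ℚ) (n : ℕ) : el x n = motzkinPoly n x (1 + x) := by
  induction n using Nat.strong_induction_on with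
  | _ n ih =>
    match n with
    | 0 =>
      simp [el, motzkinPoly, nar, Finset.sum_range_one]
    | 1 =>
      rw [el, motzkinPoly]
      norm_num [Finset.sum_range_succ, nar_zero_right, nar_one_right]
      ring
    | (m + 2) =>
      have h1 := ih (m + 1) (by omega)
      have h0 := ih m (by omega)
      have hrec := hL x m
      rw [h1, h0, ← hM x m] at hrec
      exact mul_left_cancel₀ (show ((m : ℚ) + 4) ≠ 0 by positivity) hrec

end CokerAux

/-- Coker's formula in two-variable form: N_{n+1}(x) = M_n(x; 1+x). -/
theorem coker_two_variable (n : ℕ) (x : ℚ) :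
    ∑ k ∈ Finset.Icc 1 (n + 1),
        (((n + 1).choose k * (n + 1).choose (k - 1) : ℚ) / (n + 1)) * x ^ k
      = motzkinPoly n x (1 + x) := by
  rw [← CokerAux.main x n, CokerAux.el, ← Finset.Ico_add_one_right_eq_Icc,
    Finset.sum_Ico_eq_sum_range, show n + 1 + 1 - 1 = n + 1 from by omega]
  refine Finset.sum_congr rfl fun k hk => ?_
  rw [CokerAux.nar, show 1 + k - 1 = k from by omega, show 1 + k = k + 1 from by omega]
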